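/- Suppose M⋆ solves min KL(M‖Q) over probability measures on V^{N+1} with fixed marginals μ₀ at time 0 and μ_N at time N, where Q is a Markov measure with strictly positive transition kernel A and strictly positive initial law ν₀. Then M⋆ is itself Markov: there exist transition kernels π⋆(t) such that M⋆(i₀,…,i_N) = μ₀(i₀)∏_t π⋆(t)(i_t,i_{t+1}). -/

import Mathlib

open Finset

section SchroedingerAux

variable {n : ℕ}

/-- Evolve a measure on `Fin n` through a sequence of kernels. -/
noncomputable def evolve (π : ℕ → Matrix (Fin n) (Fin n) ℝ) (w : Fin n → ℝ) : ℕ → Fin n → ℝ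
  | 0 => w
  | (t+1) => fun j => ∑ i, evolve π w t i * π t i j

lemma sum_snoc {α : Type*} [AddCommMonoid α] (N : ℕ) (F : (Fin (N+1) → Fin n) → α) :
    ∑ x, F x = ∑ y : Fin N → Fin n, ∑ j, F (Fin.snoc y j) := by
  rw [← (Fin.snocEquiv (fun _ => Fin n)).sum_comp F]
  rw [Fintype.sum_prod_type]
  exact Finset.sum_comm

lemma prod_snoc (N : ℕ) (π : ℕ → Matrix (Fin n) (Fin n) ℝ) (y : Fin (N+1) → Fin n) (j : Fin n) :
    (∏ t : Fin (N+1), π t ((Fin.snoc y j : Fin (N+2) → Fin n) t.castSucc)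
        ((Fin.snoc y j : Fin (N+2) → Fin n) t.succ))
      = (∏ t : Fin N, π t (y t.castSucc) (y t.succ)) * π N (y (Fin.last N)) j := by
  rw [Fin.prod_univ_castSucc]
  congr 1
  · apply Finset.prod_congr rfl
    intro t _
    rw [Fin.coe_castSucc]
    congr 1
    · exact Fin.snoc_castSucc ..
    · rw [Fin.succ_castSucc]; exact Fin.snoc_castSucc ..
  · congr 1
    · exact Fin.snoc_castSucc ..
    · rw [Fin.succ_last]; exact Fin.snoc_last ..

/-- Path weight of a (sub)Markov path measure. -/
noncomputable def pw (π : ℕ → Matrix (Fin n) (Fin n) ℝ) (w : Fin n → ℝ) (N : ℕ)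
    (x : Fin (N+1) → Fin n) : ℝ :=
  w (x 0) * ∏ t : Fin N, π t (x t.castSucc) (x t.succ)

lemma pw_snoc (π : ℕ → Matrix (Fin n) (Fin n) ℝ) (w : Fin n → ℝ) (N : ℕ)
    (y : Fin (N+1) → Fin n) (j : Fin n) :
    pw π w (N+1) (Fin.snoc y j) = pw π w N y * π N (y (Fin.last N)) j := by
  unfold pw
  rw [prod_snoc]
  rw [mul_assoc]
  congr 2

/-- Marginal of a Markov path measure at the last time. -/
lemma marg_last (π : ℕ → Matrix (Fin n) (Fin n) ℝ) (w : Fin n → ℝ) :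
    ∀ (N : ℕ) (i : Fin n),
      (∑ x : Fin (N+1) → Fin n, if x (Fin.last N) = i then pw π w N x else 0)
        = evolve π w N i := by
  intro N
  induction N with
  | zero =>
    intro i
    rw [← (Equiv.funUnique (Fin 1) (Fin n)).symm.sum_comp]
    simp [pw, evolve, Equiv.funUnique]
  | succ M ih =>
    intro i
    rw [sum_snoc]
    have step : ∀ y : Fin (M+1) → Fin n,
        (∑ j, if (Fin.snoc y j : Fin (M+2) → Fin n) (Fin.last (M+1)) = i
            then pw π w (M+1) (Fin.snoc y j) else 0)
          = ∑ k, (if y (Fin.last M) = k then pw π w M y else 0) * π M k i := by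
      intro y
      have : ∀ j : Fin n, ((Fin.snoc y j : Fin (M+2) → Fin n) (Fin.last (M+1)) = i) = (j = i) := by
        intro j; rw [Fin.snoc_last]
      simp_rw [this, pw_snoc, ite_mul, zero_mul]
      rw [Finset.sum_ite_eq' univ i, Finset.sum_ite_eq univ (y (Fin.last M))]
      simp
    calc ∑ y : Fin (M+1) → Fin n, ∑ j, (if (Fin.snoc y j : Fin (M+2) → Fin n) (Fin.last (M+1)) = i
            then pw π w (M+1) (Fin.snoc y j) else 0)
        = ∑ y : Fin (M+1) → Fin n, ∑ k, (if y (Fin.last M) = k then pw π w M y else 0) * π M k i := by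
          exact Finset.sum_congr rfl (fun y _ => step y)
      _ = ∑ k, (∑ y : Fin (M+1) → Fin n, if y (Fin.last M) = k then pw π w M y else 0) * π M k i := by
          rw [Finset.sum_comm]
          exact Finset.sum_congr rfl (fun k _ => (Finset.sum_mul ..).symm)
      _ = evolve π w (M+1) i := by
          apply Finset.sum_congr rfl
          intro k _
          rw [ih k]

/-- Marginal of a Markov path measure at any time. -/
lemma marg_mid (π : ℕ → Matrix (Fin n) (Fin n) ℝ) (hrow : ∀ s i, ∑ j, π s i j = 1)
    (w : Fin n → ℝ) :
    ∀ (N : ℕ) (t : ℕ) (ht : t < N + 1) (i : Fin n),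
      (∑ x : Fin (N+1) → Fin n, if x ⟨t, ht⟩ = i then pw π w N x else 0)
        = evolve π w t i := by
  intro N
  induction N with
  | zero =>
    intro t ht i
    obtain rfl : t = 0 := by omega
    exact marg_last π w 0 i
  | succ M ih =>
    intro t ht i
    by_cases h : t = M + 1
    · subst h
      have : (⟨M+1, ht⟩ : Fin (M+2)) = Fin.last (M+1) := rfl
      rw [this]
      exact marg_last π w (M+1) i
    · have ht' : t < M + 1 := by omega
      rw [sum_snoc]
      have step : ∀ y : Fin (M+1) → Fin n,
          (∑ j, if (Fin.snoc y j : Fin (M+2) → Fin n) ⟨t, ht⟩ = i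
              then pw π w (M+1) (Fin.snoc y j) else 0)
            = (if y ⟨t, ht'⟩ = i then pw π w M y else 0) := by
        intro y
        have hco : ∀ j : Fin n, (Fin.snoc y j : Fin (M+2) → Fin n) ⟨t, ht⟩ = y ⟨t, ht'⟩ := by
          intro j
          show (Fin.snoc y j : Fin (M+2) → Fin n) (Fin.castSucc ⟨t, ht'⟩) = y ⟨t, ht'⟩
          exact Fin.snoc_castSucc ..
        simp_rw [hco, pw_snoc]
        by_cases hcond : y ⟨t, ht'⟩ = i
        · simp only [hcond, if_true]
          rw [← Finset.mul_sum, hrow, mul_one]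
        · simp [hcond]
      rw [Finset.sum_congr rfl (fun y _ => step y)]
      exact ih t ht' i

/-- Pairwise marginal of a Markov path measure. -/
lemma marg_pair (π : ℕ → Matrix (Fin n) (Fin n) ℝ) (hrow : ∀ s i, ∑ j, π s i j = 1)
    (w : Fin n → ℝ) :
    ∀ (N : ℕ) (t : ℕ) (ht : t < N) (i j : Fin n),
      (∑ x : Fin (N+1) → Fin n,
        if x ⟨t, by omega⟩ = i ∧ x ⟨t+1, by omega⟩ = j then pw π w N x else 0)
        = evolve π w t i * π t i j := by
  intro N
  induction N with
  | zero => intro t ht; exact absurd ht (Nat.not_lt_zero t)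
  | succ M ih =>
    intro t ht i j
    by_cases h : t = M
    · subst h
      rw [sum_snoc]
      have step : ∀ y : Fin (t+1) → Fin n,
          (∑ jN, if (Fin.snoc y jN : Fin (t+2) → Fin n) ⟨t, by omega⟩ = i ∧
              (Fin.snoc y jN : Fin (t+2) → Fin n) ⟨t+1, by omega⟩ = j
              then pw π w (t+1) (Fin.snoc y jN) else 0)
            = (if y (Fin.last t) = i then pw π w t y else 0) * π t i j := by
        intro y
        have hco1 : ∀ jN : Fin n,
            (Fin.snoc y jN : Fin (t+2) → Fin n) ⟨t, by omega⟩ = y (Fin.last t) := by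
          intro jN
          show (Fin.snoc y jN : Fin (t+2) → Fin n) (Fin.castSucc (Fin.last t)) = y (Fin.last t)
          exact Fin.snoc_castSucc ..
        have hco2 : ∀ jN : Fin n,
            (Fin.snoc y jN : Fin (t+2) → Fin n) ⟨t+1, by omega⟩ = jN := by
          intro jN
          show (Fin.snoc y jN : Fin (t+2) → Fin n) (Fin.last (t+1)) = jN
          exact Fin.snoc_last ..
        simp_rw [hco1, hco2, pw_snoc]
        by_cases hcond : y (Fin.last t) = i
        · simp only [hcond, true_and, if_true]
          rw [Finset.sum_ite_eq' univ j]
          simp [hcond, mul_assoc]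
        · simp [hcond]
      rw [Finset.sum_congr rfl (fun y _ => step y)]
      rw [← Finset.sum_mul]
      rw [marg_last π w t i]
    · have ht' : t < M := by omega
      rw [sum_snoc]
      have step : ∀ y : Fin (M+1) → Fin n,
          (∑ jN, if (Fin.snoc y jN : Fin (M+2) → Fin n) ⟨t, by omega⟩ = i ∧
              (Fin.snoc y jN : Fin (M+2) → Fin n) ⟨t+1, by omega⟩ = j
              then pw π w (M+1) (Fin.snoc y jN) else 0)
            = (if y ⟨t, by omega⟩ = i ∧ y ⟨t+1, by omega⟩ = j then pw π w M y else 0) := by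
        intro y
        have hco1 : ∀ jN : Fin n,
            (Fin.snoc y jN : Fin (M+2) → Fin n) ⟨t, by omega⟩ = y ⟨t, by omega⟩ := by
          intro jN
          show (Fin.snoc y jN : Fin (M+2) → Fin n) (Fin.castSucc ⟨t, by omega⟩) = _
          exact Fin.snoc_castSucc ..
        have hco2 : ∀ jN : Fin n,
            (Fin.snoc y jN : Fin (M+2) → Fin n) ⟨t+1, by omega⟩ = y ⟨t+1, by omega⟩ := by
          intro jN
          show (Fin.snoc y jN : Fin (M+2) → Fin n) (Fin.castSucc ⟨t+1, by omega⟩) = _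
          exact Fin.snoc_castSucc ..
        simp_rw [hco1, hco2, pw_snoc]
        by_cases hcond : y ⟨t, by omega⟩ = i ∧ y ⟨t+1, by omega⟩ = j
        · simp only [hcond, if_true, and_self, hcond.1, hcond.2]
          rw [← Finset.mul_sum, hrow, mul_one]
        · simp [hcond]
      rw [Finset.sum_congr rfl (fun y _ => step y)]
      exact ih t ht' i j

/-- Rewrite a sum weighted by a function of time-0 value and consecutive pairs via marginals. -/
lemma weight_sum (N : ℕ) (P : (Fin (N+1) → Fin n) → ℝ) (f0 : Fin n → ℝ)
    (g : Fin N → Fin n → Fin n → ℝ) :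
    ∑ x : Fin (N+1) → Fin n, P x * (f0 (x 0) + ∑ t : Fin N, g t (x t.castSucc) (x t.succ))
      = (∑ i, (∑ x : Fin (N+1) → Fin n, if x 0 = i then P x else 0) * f0 i)
        + ∑ t : Fin N, ∑ i, ∑ j,
            (∑ x : Fin (N+1) → Fin n, if x t.castSucc = i ∧ x t.succ = j then P x else 0)
              * g t i j := by
  simp_rw [mul_add, Finset.sum_add_distrib]
  congr 1
  · simp_rw [Finset.sum_mul, ite_mul, zero_mul]
    rw [Finset.sum_comm]
    apply Finset.sum_congr rfl
    intro x _
    rw [Finset.sum_ite_eq univ (x 0) (fun i => P x * f0 i)]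
    simp
  · simp_rw [Finset.mul_sum]
    rw [Finset.sum_comm]
    apply Finset.sum_congr rfl
    intro t _
    have key : ∀ x : Fin (N+1) → Fin n, P x * g t (x t.castSucc) (x t.succ)
        = ∑ i, ∑ j, if x t.castSucc = i ∧ x t.succ = j then P x * g t i j else 0 := by
      intro x
      have : ∀ j, (∑ i, if x t.castSucc = i ∧ x t.succ = j then P x * g t i j else 0)
          = if x t.succ = j then P x * g t (x t.castSucc) j else 0 := by
        intro j
        by_cases h : x t.succ = j
        · simp only [h, and_true]
          rw [Finset.sum_ite_eq univ (x t.castSucc) (fun i => P x * g t i j)]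
          simp
        · simp [h]
      rw [Finset.sum_comm]
      simp_rw [this]
      rw [Finset.sum_ite_eq univ (x t.succ) (fun j => P x * g t (x t.castSucc) j)]
      simp
    calc ∑ x : Fin (N+1) → Fin n, P x * g t (x t.castSucc) (x t.succ)
        = ∑ x : Fin (N+1) → Fin n, ∑ i, ∑ j,
            if x t.castSucc = i ∧ x t.succ = j then P x * g t i j else 0 :=
          Finset.sum_congr rfl (fun x _ => key x)
      _ = ∑ i, ∑ x : Fin (N+1) → Fin n, ∑ j,
            if x t.castSucc = i ∧ x t.succ = j then P x * g t i j else 0 := Finset.sum_comm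
      _ = ∑ i, ∑ j, ∑ x : Fin (N+1) → Fin n,
            if x t.castSucc = i ∧ x t.succ = j then P x * g t i j else 0 :=
          Finset.sum_congr rfl (fun i _ => Finset.sum_comm)
      _ = ∑ i, ∑ j, (∑ x : Fin (N+1) → Fin n,
            if x t.castSucc = i ∧ x t.succ = j then P x else 0) * g t i j := by
          simp_rw [Finset.sum_mul, ite_mul, zero_mul]

lemma gibbs_ge (a b : ℝ) (ha : 0 < a) (hb : 0 < b) :
    a - b ≤ a * Real.log (a / b) := by
  have h := Real.log_le_sub_one_of_pos (div_pos hb ha)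
  have hlog : Real.log (a / b) = - Real.log (b / a) := by
    rw [← Real.log_inv, inv_div]
  rw [hlog]
  have h2 := mul_le_mul_of_nonneg_left h ha.le
  have h3 : a * (b / a - 1) = b - a := by field_simp
  nlinarith

lemma gibbs_eq (a b : ℝ) (ha : 0 < a) (hb : 0 < b)
    (h : a * Real.log (a / b) - (a - b) = 0) : a = b := by
  by_contra hne
  have hba : b / a ≠ 1 := by
    intro h1
    field_simp at h1
    exact hne h1.symm
  have hlt := Real.log_lt_sub_one_of_pos (div_pos hb ha) hba
  have hlog : Real.log (a / b) = - Real.log (b / a) := by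
    rw [← Real.log_inv, inv_div]
  rw [hlog] at h
  have h2 := mul_lt_mul_of_pos_left hlt ha
  have h3 : a * (b / a - 1) = b - a := by field_simp
  nlinarith

end SchroedingerAux

/-- Relative entropy on a finite set, with the convention `0 · log 0 = 0`. -/
noncomputable def KLdiv {X : Type*} [Fintype X] (P R : X → ℝ) : ℝ :=
  ∑ x, P x * Real.log (P x / R x)

/-- the Schrödinger bridge inherits the Markov property — a
minimizer of KL(·‖Q) over probability measures on path space with fixed
time-0 marginal μ₀ and time-N marginal μ_N, where Q is Markov with strictly
positive kernel A and strictly positive initial law ν₀, is itself a Markov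
path measure. -/
theorem schroedinger_bridge_is_markov (n N : ℕ)
    (A : Matrix (Fin n) (Fin n) ℝ) (hApos : ∀ i j, 0 < A i j)
    (hArow : ∀ i, ∑ j, A i j = 1)
    (ν₀ : Fin n → ℝ) (hν₀pos : ∀ i, 0 < ν₀ i) (hν₀sum : ∑ i, ν₀ i = 1)
    (μ₀ μN : Fin n → ℝ)
    (Q : (Fin (N + 1) → Fin n) → ℝ)
    (hQ : ∀ x, Q x = ν₀ (x 0) * ∏ t : Fin N, A (x t.castSucc) (x t.succ))
    (Mstar : (Fin (N + 1) → Fin n) → ℝ)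
    (hMnn : ∀ x, 0 ≤ Mstar x) (hMsum : ∑ x, Mstar x = 1)
    (hM0 : ∀ i, (∑ x : Fin (N + 1) → Fin n,
      if x 0 = i then Mstar x else 0) = μ₀ i)
    (hMN : ∀ i, (∑ x : Fin (N + 1) → Fin n,
      if x (Fin.last N) = i then Mstar x else 0) = μN i)
    (hopt : ∀ M : (Fin (N + 1) → Fin n) → ℝ,
      (∀ x, 0 ≤ M x) → (∑ x, M x = 1) →
      (∀ i, (∑ x : Fin (N + 1) → Fin n, if x 0 = i then M x else 0) = μ₀ i) →
      (∀ i, (∑ x : Fin (N + 1) → Fin n,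
        if x (Fin.last N) = i then M x else 0) = μN i) →
      KLdiv Mstar Q ≤ KLdiv M Q) :
    ∃ π : Fin N → Matrix (Fin n) (Fin n) ℝ,
      (∀ t i j, 0 ≤ π t i j) ∧ (∀ t i, ∑ j, π t i j = 1) ∧
      ∀ x, Mstar x = μ₀ (x 0) *
        ∏ t : Fin N, π t (x t.castSucc) (x t.succ) := by
  classical
  -- one-time and pairwise marginals of Mstar
  set p : Fin (N+1) → Fin n → ℝ :=
    fun t i => ∑ x : Fin (N+1) → Fin n, if x t = i then Mstar x else 0 with hpdef
  set pr : Fin N → Fin n → Fin n → ℝ :=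
    fun t i j => ∑ x : Fin (N+1) → Fin n,
      if x t.castSucc = i ∧ x t.succ = j then Mstar x else 0 with hprdef
  have hpnn : ∀ t i, 0 ≤ p t i := by
    intro t i; simp only [hpdef]
    exact Finset.sum_nonneg fun x _ => by split <;> simp [hMnn x]
  have hprnn : ∀ t i j, 0 ≤ pr t i j := by
    intro t i j; simp only [hprdef]
    exact Finset.sum_nonneg fun x _ => by split <;> simp [hMnn x]
  have hple : ∀ (t : Fin (N+1)) (x : Fin (N+1) → Fin n), Mstar x ≤ p t (x t) := by
    intro t x; simp only [hpdef]
    have := Finset.single_le_sum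
      (f := fun y : Fin (N+1) → Fin n => if y t = x t then Mstar y else 0)
      (fun y _ => by split <;> simp [hMnn y]) (Finset.mem_univ x)
    simpa using this
  have hprle : ∀ (t : Fin N) (x : Fin (N+1) → Fin n),
      Mstar x ≤ pr t (x t.castSucc) (x t.succ) := by
    intro t x; simp only [hprdef]
    have := Finset.single_le_sum
      (f := fun y : Fin (N+1) → Fin n =>
        if y t.castSucc = x t.castSucc ∧ y t.succ = x t.succ then Mstar y else 0)
      (fun y _ => by split <;> simp [hMnn y]) (Finset.mem_univ x)
    simpa using this
  have hrowpr : ∀ (t : Fin N) i, ∑ j, pr t i j = p t.castSucc i := by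
    intro t i; simp only [hpdef, hprdef]
    rw [Finset.sum_comm]
    apply Finset.sum_congr rfl
    intro x _
    by_cases h : x t.castSucc = i
    · simp only [h, true_and, if_true]
      rw [Finset.sum_ite_eq univ (x t.succ) (fun _ => Mstar x)]
      simp
    · simp [h]
  have hcolpr : ∀ (t : Fin N) j, ∑ i, pr t i j = p t.succ j := by
    intro t j; simp only [hpdef, hprdef]
    rw [Finset.sum_comm]
    apply Finset.sum_congr rfl
    intro x _
    by_cases h : x t.succ = j
    · simp only [h, and_true, if_true]
      rw [Finset.sum_ite_eq univ (x t.castSucc) (fun _ => Mstar x)]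
      simp
    · simp [h]
  -- the candidate transition kernels
  set π : Fin N → Matrix (Fin n) (Fin n) ℝ :=
    fun t i j => if 0 < p t.castSucc i then pr t i j / p t.castSucc i else A i j with hπdef
  have hπnn : ∀ t i j, 0 ≤ π t i j := by
    intro t i j; simp only [hπdef]
    split_ifs with h
    · exact div_nonneg (hprnn t i j) h.le
    · exact (hApos i j).le
  have hπrow : ∀ t i, ∑ j, π t i j = 1 := by
    intro t i
    by_cases h : 0 < p t.castSucc i
    · simp only [hπdef, if_pos h]
      rw [← Finset.sum_div, hrowpr, div_self (ne_of_gt h)]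
    · simp only [hπdef, if_neg h]
      exact hArow i
  have hkey : ∀ (t : Fin N) i j, p t.castSucc i * π t i j = pr t i j := by
    intro t i j
    by_cases h : 0 < p t.castSucc i
    · simp only [hπdef, if_pos h]
      field_simp
    · have hz : p t.castSucc i = 0 := le_antisymm (not_lt.mp h) (hpnn _ _)
      have hprz : pr t i j = 0 := by
        have h1 : pr t i j ≤ ∑ j', pr t i j' :=
          Finset.single_le_sum (fun j' _ => hprnn t i j') (mem_univ j)
        rw [hrowpr, hz] at h1
        exact le_antisymm h1 (hprnn t i j)
      rw [hz, hprz, zero_mul]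
  -- ℕ-indexed kernels
  set πt : ℕ → Matrix (Fin n) (Fin n) ℝ :=
    fun s => if h : s < N then π ⟨s, h⟩ else A with hπtdef
  have hπteq : ∀ t : Fin N, πt (t : ℕ) = π t := by
    intro t; simp only [hπtdef]
    rw [dif_pos t.isLt]
  have hπtrow : ∀ s i, ∑ j, πt s i j = 1 := by
    intro s i; simp only [hπtdef]
    by_cases h : s < N
    · rw [dif_pos h]; exact hπrow _ i
    · rw [dif_neg h]; exact hArow i
  -- the Markovianized competitor M' = pw πt μ₀ N
  have hMP : ∀ x : Fin (N+1) → Fin n, pw πt μ₀ N x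
      = μ₀ (x 0) * ∏ t : Fin N, π t (x t.castSucc) (x t.succ) := by
    intro x
    simp only [pw]
    congr 1
    exact Finset.prod_congr rfl fun t _ => by rw [hπteq t]
  have hμ₀nn : ∀ i, 0 ≤ μ₀ i := by
    intro i; rw [← hM0 i]
    exact Finset.sum_nonneg fun x _ => by split <;> simp [hMnn x]
  have hM'nn : ∀ x, 0 ≤ pw πt μ₀ N x := by
    intro x; rw [hMP x]
    exact mul_nonneg (hμ₀nn _) (Finset.prod_nonneg fun t _ => hπnn t _ _)
  -- evolve equals the marginals of Mstar
  have hev : ∀ (t : ℕ) (ht : t < N + 1) (i : Fin n), evolve πt μ₀ t i = p ⟨t, ht⟩ i := by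
    intro t
    induction t with
    | zero =>
      intro ht i
      have h0 : (⟨0, ht⟩ : Fin (N+1)) = 0 := by ext; simp
      rw [h0]
      show μ₀ i = p 0 i
      simp only [hpdef]
      exact (hM0 i).symm
    | succ s ihs =>
      intro ht i
      have hs : s < N := by omega
      have hs1 : s < N + 1 := by omega
      have h1 : πt s = π ⟨s, hs⟩ := by simp only [hπtdef]; rw [dif_pos hs]
      have h2 : (⟨s, hs1⟩ : Fin (N+1)) = Fin.castSucc ⟨s, hs⟩ := rfl
      have h3 : (⟨s+1, ht⟩ : Fin (N+1)) = Fin.succ ⟨s, hs⟩ := rfl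
      calc evolve πt μ₀ (s+1) i = ∑ k, evolve πt μ₀ s k * πt s k i := by simp only [evolve]
        _ = ∑ k, p (Fin.castSucc ⟨s, hs⟩) k * π ⟨s, hs⟩ k i := by
            apply Finset.sum_congr rfl
            intro k _
            rw [ihs hs1 k, h1, h2]
        _ = ∑ k, pr ⟨s, hs⟩ k i := Finset.sum_congr rfl fun k _ => hkey ⟨s, hs⟩ k i
        _ = p (Fin.succ ⟨s, hs⟩) i := hcolpr ⟨s, hs⟩ i
        _ = p ⟨s+1, ht⟩ i := by rw [h3]
  -- M' is a valid competitor
  have hM'0 : ∀ i, (∑ x : Fin (N+1) → Fin n, if x 0 = i then pw πt μ₀ N x else 0) = μ₀ i := by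
    intro i
    have h0 : (0 : Fin (N+1)) = ⟨0, Nat.succ_pos N⟩ := by ext; simp
    calc (∑ x : Fin (N+1) → Fin n, if x 0 = i then pw πt μ₀ N x else 0)
        = ∑ x : Fin (N+1) → Fin n, if x ⟨0, Nat.succ_pos N⟩ = i then pw πt μ₀ N x else 0 := by
          simp_rw [← h0]
      _ = evolve πt μ₀ 0 i := marg_mid πt hπtrow μ₀ N 0 (Nat.succ_pos N) i
      _ = μ₀ i := rfl
  have hM'N : ∀ i, (∑ x : Fin (N+1) → Fin n,
      if x (Fin.last N) = i then pw πt μ₀ N x else 0) = μN i := by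
    intro i
    rw [marg_last πt μ₀ N i, hev N (Nat.lt_succ_self N) i]
    have hl : (⟨N, Nat.lt_succ_self N⟩ : Fin (N+1)) = Fin.last N := rfl
    rw [hl]
    simp only [hpdef]
    exact hMN i
  have collapse : ∀ (g : (Fin (N+1) → Fin n) → ℝ),
      ∑ x, g x = ∑ i, ∑ x : Fin (N+1) → Fin n, if x (Fin.last N) = i then g x else 0 := by
    intro g
    rw [Finset.sum_comm]
    apply Finset.sum_congr rfl
    intro x _
    rw [Finset.sum_ite_eq univ (x (Fin.last N)) (fun _ => g x)]
    simp
  have hM'sum : ∑ x, pw πt μ₀ N x = 1 := by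
    rw [collapse (pw πt μ₀ N)]
    simp_rw [hM'N]
    rw [collapse Mstar] at hMsum
    simp_rw [hMN] at hMsum
    exact hMsum
  have hpairM' : ∀ (t : Fin N) i j, (∑ x : Fin (N+1) → Fin n,
      if x t.castSucc = i ∧ x t.succ = j then pw πt μ₀ N x else 0) = pr t i j := by
    intro t i j
    calc (∑ x : Fin (N+1) → Fin n,
          if x t.castSucc = i ∧ x t.succ = j then pw πt μ₀ N x else 0)
        = evolve πt μ₀ (t : ℕ) i * πt (t : ℕ) i j := marg_pair πt hπtrow μ₀ N t t.isLt i j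
      _ = p t.castSucc i * π t i j := by
          rw [hev (t : ℕ) (by omega) i, hπteq t]
          rfl
      _ = pr t i j := hkey t i j
  -- optimality
  have hKLle := hopt (pw πt μ₀ N) hM'nn hM'sum hM'0 hM'N
  -- the log-likelihood functional
  set L : (Fin (N+1) → Fin n) → ℝ := fun x =>
    Real.log (μ₀ (x 0) / ν₀ (x 0)) + ∑ t : Fin N,
      Real.log (π t (x t.castSucc) (x t.succ) / A (x t.castSucc) (x t.succ)) with hLdef
  have hQpos : ∀ x, 0 < Q x := by
    intro x; rw [hQ x]
    exact mul_pos (hν₀pos _) (Finset.prod_pos fun t _ => hApos _ _)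
  have hMposM' : ∀ x, 0 < Mstar x → 0 < pw πt μ₀ N x := by
    intro x hx
    rw [hMP x]
    apply mul_pos
    · calc (0:ℝ) < Mstar x := hx
        _ ≤ p 0 (x 0) := hple 0 x
        _ = μ₀ (x 0) := by simp only [hpdef]; exact hM0 (x 0)
    · apply Finset.prod_pos
      intro t _
      have hp1 : 0 < p t.castSucc (x t.castSucc) := lt_of_lt_of_le hx (hple t.castSucc x)
      have hp2 : 0 < pr t (x t.castSucc) (x t.succ) := lt_of_lt_of_le hx (hprle t x)
      simp only [hπdef]
      rw [if_pos hp1]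
      exact div_pos hp2 hp1
  have hfac : ∀ x, 0 < pw πt μ₀ N x →
      0 < μ₀ (x 0) ∧ ∀ t : Fin N, 0 < π t (x t.castSucc) (x t.succ) := by
    intro x hx
    rw [hMP x] at hx
    constructor
    · rcases mul_pos_iff.mp hx with ⟨h1, _⟩ | ⟨h1, _⟩
      · exact h1
      · linarith [hμ₀nn (x 0)]
    · intro t
      by_contra hc
      have hz : π t (x t.castSucc) (x t.succ) = 0 :=
        le_antisymm (not_lt.mp hc) (hπnn t _ _)
      have : (∏ t : Fin N, π t (x t.castSucc) (x t.succ)) = 0 :=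
        Finset.prod_eq_zero (mem_univ t) hz
      rw [this, mul_zero] at hx
      exact lt_irrefl 0 hx
  have hlogM' : ∀ x, 0 < pw πt μ₀ N x → Real.log (pw πt μ₀ N x / Q x) = L x := by
    intro x hx
    obtain ⟨h1, h2⟩ := hfac x hx
    have e : pw πt μ₀ N x / Q x
        = (μ₀ (x 0) / ν₀ (x 0)) * ∏ t : Fin N,
            (π t (x t.castSucc) (x t.succ) / A (x t.castSucc) (x t.succ)) := by
      rw [hMP x, hQ x, Finset.prod_div_distrib, div_mul_div_comm]
    rw [e, Real.log_mul (ne_of_gt (div_pos h1 (hν₀pos _)))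
      (ne_of_gt (Finset.prod_pos fun t _ => div_pos (h2 t) (hApos _ _))),
      Real.log_prod (fun t _ => ne_of_gt (div_pos (h2 t) (hApos _ _)))]
  have hKL_M' : KLdiv (pw πt μ₀ N) Q = ∑ x, pw πt μ₀ N x * L x := by
    simp only [KLdiv]
    apply Finset.sum_congr rfl
    intro x _
    rcases (hM'nn x).lt_or_eq with h | h
    · rw [hlogM' x h]
    · rw [← h, zero_mul, zero_mul]
  have hKL_Mstar : KLdiv Mstar Q
      = (∑ x, Mstar x * Real.log (Mstar x / pw πt μ₀ N x)) + ∑ x, Mstar x * L x := by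
    simp only [KLdiv]
    rw [← Finset.sum_add_distrib]
    apply Finset.sum_congr rfl
    intro x _
    rcases (hMnn x).lt_or_eq with h | h
    · have hm' := hMposM' x h
      rw [← mul_add]
      congr 1
      have hsplit : Real.log (Mstar x / Q x)
          = Real.log (Mstar x / pw πt μ₀ N x) + Real.log (pw πt μ₀ N x / Q x) := by
        rw [Real.log_div (ne_of_gt h) (ne_of_gt hm'),
          Real.log_div (ne_of_gt hm') (ne_of_gt (hQpos x)),
          Real.log_div (ne_of_gt h) (ne_of_gt (hQpos x))]
        ring
      rw [hsplit, hlogM' x hm']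
    · rw [← h, zero_mul, zero_mul, zero_mul, add_zero]
  have hLsum : ∑ x, Mstar x * L x = ∑ x, pw πt μ₀ N x * L x := by
    simp only [hLdef]
    rw [weight_sum N Mstar (fun i => Real.log (μ₀ i / ν₀ i))
        (fun t i j => Real.log (π t i j / A i j)),
      weight_sum N (pw πt μ₀ N) (fun i => Real.log (μ₀ i / ν₀ i))
        (fun t i j => Real.log (π t i j / A i j))]
    congr 1
    · apply Finset.sum_congr rfl
      intro i _
      rw [hM0 i, hM'0 i]
    · apply Finset.sum_congr rfl
      intro t _
      apply Finset.sum_congr rfl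
      intro i _
      apply Finset.sum_congr rfl
      intro j _
      rw [hpairM' t i j]
  -- Gibbs' inequality argument
  have hS : (∑ x, Mstar x * Real.log (Mstar x / pw πt μ₀ N x)) ≤ 0 := by
    rw [hKL_Mstar, hKL_M', ← hLsum] at hKLle
    linarith
  have hsub : ∑ x, (Mstar x - pw πt μ₀ N x) = 0 := by
    rw [Finset.sum_sub_distrib, hMsum, hM'sum]
    ring
  have hDnn : ∀ x, 0 ≤ Mstar x * Real.log (Mstar x / pw πt μ₀ N x)
      - (Mstar x - pw πt μ₀ N x) := by
    intro x
    rcases (hMnn x).lt_or_eq with h | h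
    · have hb := hMposM' x h
      have := gibbs_ge (Mstar x) (pw πt μ₀ N x) h hb
      linarith
    · rw [← h]
      simp only [zero_mul, zero_sub, sub_neg_eq_add, zero_add]
      exact hM'nn x
  have hDsum : ∑ x, (Mstar x * Real.log (Mstar x / pw πt μ₀ N x)
      - (Mstar x - pw πt μ₀ N x)) = ∑ x, Mstar x * Real.log (Mstar x / pw πt μ₀ N x) := by
    rw [Finset.sum_sub_distrib, hsub, sub_zero]
  have hDzero : ∀ x ∈ (univ : Finset (Fin (N+1) → Fin n)),
      Mstar x * Real.log (Mstar x / pw πt μ₀ N x) - (Mstar x - pw πt μ₀ N x) = 0 := by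
    have h0 : ∑ x, (Mstar x * Real.log (Mstar x / pw πt μ₀ N x)
        - (Mstar x - pw πt μ₀ N x)) = 0 :=
      le_antisymm (by rw [hDsum]; exact hS) (Finset.sum_nonneg fun x _ => hDnn x)
    exact (Finset.sum_eq_zero_iff_of_nonneg (fun x _ => hDnn x)).mp h0
  have hfinal : ∀ x, Mstar x = pw πt μ₀ N x := by
    intro x
    have hd := hDzero x (mem_univ x)
    rcases (hMnn x).lt_or_eq with h | h
    · exact gibbs_eq (Mstar x) (pw πt μ₀ N x) h (hMposM' x h) hd
    · rw [← h] at hd ⊢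
      simp only [zero_mul, zero_sub, sub_neg_eq_add, zero_add] at hd
      exact hd.symm
  exact ⟨π, hπnn, hπrow, fun x => (hfinal x).trans (hMP x)⟩
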